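/- Let n ≥ 2 and consider the permutations of the set {1, 2, …, 4n} given by η = (1,2,…,2n)(2n+1,2n+2,…,4n) (a product of two disjoint 2n-cycles) and σ = ∏_{k=1}^{n} (k, 4n+1−k, n+k, 3n+1−k) (a product of n disjoint 4-cycles). Then η^{2n} = 1, σ⁻¹ η σ = η⁻¹, and σ² = ηⁿ. -/

import Mathlib

def efun (n m : ℕ) : ℕ := if m + 1 = 2*n then 0 else if m + 1 = 4*n then 2*n else m + 1
def sfun (n m : ℕ) : ℕ := if m < 2*n then 4*n-1-m else if m < 3*n then 3*n-1-m else 5*n-1-m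
def pfun (n m : ℕ) : ℕ :=
  if m < 2*n then (if m < n then m+n else m-n) else (if m < 3*n then m+n else m-n)

lemma prod_map_range_fix {α : Type*} (F : ℕ → Equiv.Perm α) (n : ℕ) (x : α)
    (h : ∀ j < n, F j x = x) : ((List.range n).map F).prod x = x := by
  induction n with
  | zero => simp
  | succ n ih =>
    rw [List.range_succ, List.map_append, List.prod_append]
    simp only [List.map_cons, List.map_nil, List.prod_cons, List.prod_nil, mul_one,
      Equiv.Perm.mul_apply]
    rw [h n (by omega), ih (fun j hj => h j (by omega))]

lemma prod_map_range_apply {α : Type*} (F : ℕ → Equiv.Perm α) (n k : ℕ) (hk : k < n) (x : α)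
    (h1 : ∀ j < n, j ≠ k → F j x = x) (h2 : ∀ j < n, j ≠ k → F j (F k x) = F k x) :
    ((List.range n).map F).prod x = F k x := by
  induction n with
  | zero => omega
  | succ n ih =>
    rw [List.range_succ, List.map_append, List.prod_append]
    simp only [List.map_cons, List.map_nil, List.prod_cons, List.prod_nil, mul_one,
      Equiv.Perm.mul_apply]
    rcases eq_or_lt_of_le (Nat.lt_succ_iff.mp hk) with rfl | hkn
    · exact prod_map_range_fix F k (F k x) (fun j hj => h2 j (by omega) (by omega))
    · rw [h1 n (by omega) (by omega)]
      exact ih hkn (fun j hj hne => h1 j (by omega) hne) (fun j hj hne => h2 j (by omega) hne)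

/-- For `n ≥ 2`, relabelling `{1, …, 4n}` as `Fin (4n) = {0, …, 4n-1}` via `m ↦ m - 1`,
the permutations `η = (1,2,…,2n)(2n+1,…,4n)` and
`σ = ∏_{k=1}^{n} (k, 4n+1-k, n+k, 3n+1-k)` satisfy `η^{2n} = 1`, `σ⁻¹ η σ = η⁻¹` and
`σ² = ηⁿ`. Here `f : ℕ → Fin (4n)` is reduction mod `4n`, and cycles are encoded via
`List.formPerm`. -/
theorem dicyclic_permutation_relations (n : ℕ) (hn : 2 ≤ n)
    (f : ℕ → Fin (4 * n)) (hf : ∀ m : ℕ, (f m : ℕ) = m % (4 * n))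
    (η σ : Equiv.Perm (Fin (4 * n)))
    (hη : η = ((List.range (2 * n)).map f).formPerm *
              ((List.range (2 * n)).map (fun k => f (2 * n + k))).formPerm)
    (hσ : σ = ((List.range n).map (fun k =>
              ([k, 4 * n - 1 - k, n + k, 3 * n - 1 - k].map f).formPerm)).prod) :
    η ^ (2 * n) = 1 ∧ σ⁻¹ * η * σ = η⁻¹ ∧ σ ^ 2 = η ^ n := by
  have feq : ∀ a b, a < 4*n → b < 4*n → f a = f b → a = b := by
    intro a b ha hb h
    have := congrArg Fin.val h
    rwa [hf, hf, Nat.mod_eq_of_lt ha, Nat.mod_eq_of_lt hb] at this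
  have fx : ∀ x : Fin (4*n), f (x : ℕ) = x := by
    intro x
    exact Fin.ext (by rw [hf]; exact Nat.mod_eq_of_lt x.isLt)
  -- ===== η basics =====
  have nd1 : ((List.range (2*n)).map f).Nodup := by
    refine List.nodup_range.map_on ?_
    intro a ha b hb h
    simp only [List.mem_range] at ha hb
    exact feq a b (by omega) (by omega) h
  have nd2 : ((List.range (2*n)).map (fun k => f (2 * n + k))).Nodup := by
    refine List.nodup_range.map_on ?_
    intro a ha b hb h
    simp only [List.mem_range] at ha hb
    have := feq _ _ (by omega) (by omega) h
    omega
  have ha1 : ∀ i < 2*n, η (f i) = f ((i+1) % (2*n)) := by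
    intro i hi
    rw [hη, Equiv.Perm.mul_apply]
    have h2 : ((List.range (2*n)).map (fun k => f (2 * n + k))).formPerm (f i) = f i := by
      apply List.formPerm_apply_of_notMem
      simp only [List.mem_map, List.mem_range]
      rintro ⟨k, hk, hfk⟩
      have := feq _ _ (by omega) (by omega) hfk
      omega
    rw [h2]
    have hgi : f i = ((List.range (2*n)).map f)[i]'(by simp [hi]) := by simp
    rw [hgi, List.formPerm_apply_getElem _ nd1]
    simp
  have ha2 : ∀ i < 2*n, η (f (2*n + i)) = f (2*n + (i+1) % (2*n)) := by
    intro i hi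
    rw [hη, Equiv.Perm.mul_apply]
    have hgi : f (2*n + i) = ((List.range (2*n)).map (fun k => f (2 * n + k)))[i]'(by simp [hi]) := by
      simp
    rw [hgi, List.formPerm_apply_getElem _ nd2]
    simp only [List.length_map, List.length_range, List.getElem_map, List.getElem_range]
    apply List.formPerm_apply_of_notMem
    simp only [List.mem_map, List.mem_range]
    rintro ⟨k, hk, hfk⟩
    have h1 : (i+1) % (2*n) < 2*n := Nat.mod_lt _ (by omega)
    have := feq _ _ (by omega) (by omega) hfk
    omega
  have hp1 : ∀ (k : ℕ), ∀ i < 2*n, (η ^ k) (f i) = f ((i+k) % (2*n)) := by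
    intro k
    induction k with
    | zero => intro i hi; simp [Nat.mod_eq_of_lt hi]
    | succ k ih =>
      intro i hi
      rw [pow_succ', Equiv.Perm.mul_apply, ih i hi,
        ha1 _ (Nat.mod_lt _ (by omega)), Nat.mod_add_mod]
      congr 2 <;> omega
  have hp2 : ∀ (k : ℕ), ∀ i < 2*n, (η ^ k) (f (2*n + i)) = f (2*n + (i+k) % (2*n)) := by
    intro k
    induction k with
    | zero => intro i hi; simp [Nat.mod_eq_of_lt hi]
    | succ k ih =>
      intro i hi
      rw [pow_succ', Equiv.Perm.mul_apply, ih i hi,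
        ha2 _ (Nat.mod_lt _ (by omega)), Nat.mod_add_mod]
      congr 2 <;> omega
  have ηa : ∀ m < 4*n, η (f m) = f (efun n m) := by
    intro m hm
    rcases lt_or_ge m (2*n) with h | h
    · rw [ha1 m h]
      congr 1
      unfold efun
      split_ifs with h1 h2
      · rw [h1, Nat.mod_self]
      · omega
      · exact Nat.mod_eq_of_lt (by omega)
    · have e : f m = f (2*n + (m - 2*n)) := by congr 1; omega
      rw [e, ha2 _ (by omega)]
      congr 1
      unfold efun
      split_ifs with h1 h2
      · omega
      · have h3 : m - 2*n + 1 = 2*n := by omega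
        rw [h3, Nat.mod_self]
        omega
      · rw [Nat.mod_eq_of_lt (by omega)]
        omega
  have ηn : ∀ m < 4*n, (η ^ n) (f m) = f (pfun n m) := by
    intro m hm
    rcases lt_or_ge m (2*n) with h | h
    · rw [hp1 n m h]
      congr 1
      unfold pfun
      rw [if_pos h]
      split_ifs with h1
      · exact Nat.mod_eq_of_lt (by omega)
      · have e : m + n = (m - n) + 2*n := by omega
        rw [e, Nat.add_mod_right, Nat.mod_eq_of_lt (by omega)]
    · have e : f m = f (2*n + (m - 2*n)) := by congr 1; omega
      rw [e, hp2 n _ (by omega)]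
      congr 1
      unfold pfun
      rw [if_neg (by omega)]
      split_ifs with h1
      · rw [Nat.mod_eq_of_lt (by omega)]
        omega
      · have e2 : m - 2*n + n = (m - 3*n) + 2*n := by omega
        rw [e2, Nat.add_mod_right, Nat.mod_eq_of_lt (by omega)]
        omega
  -- ===== σ basics =====
  set F : ℕ → Equiv.Perm (Fin (4*n)) :=
    fun k => ([k, 4 * n - 1 - k, n + k, 3 * n - 1 - k].map f).formPerm with hF
  have fne : ∀ a b, a < 4*n → b < 4*n → a ≠ b → f a ≠ f b :=
    fun a b ha hb h he => h (feq a b ha hb he)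
  have ndL : ∀ k < n, ([k, 4 * n - 1 - k, n + k, 3 * n - 1 - k].map f).Nodup := by
    intro k hk
    simp only [List.map_cons, List.map_nil, List.nodup_cons, List.mem_cons,
      List.not_mem_nil, or_false, List.nodup_nil, and_true, List.mem_singleton, not_or]
    refine ⟨⟨?_, ?_, ?_⟩, ⟨?_, ?_⟩, ?_, by trivial⟩ <;> (apply fne <;> omega)
  have cyc0 : ∀ k < n, F k (f k) = f (4*n-1-k) := by
    intro k hk
    have := List.formPerm_apply_getElem ([k, 4 * n - 1 - k, n + k, 3 * n - 1 - k].map f)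
      (ndL k hk) 0 (by norm_num)
    exact this
  have cyc1 : ∀ k < n, F k (f (4*n-1-k)) = f (n+k) := by
    intro k hk
    have := List.formPerm_apply_getElem ([k, 4 * n - 1 - k, n + k, 3 * n - 1 - k].map f)
      (ndL k hk) 1 (by norm_num)
    exact this
  have cyc2 : ∀ k < n, F k (f (n+k)) = f (3*n-1-k) := by
    intro k hk
    have := List.formPerm_apply_getElem ([k, 4 * n - 1 - k, n + k, 3 * n - 1 - k].map f)
      (ndL k hk) 2 (by norm_num)
    exact this
  have cyc3 : ∀ k < n, F k (f (3*n-1-k)) = f k := by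
    intro k hk
    exact List.formPerm_cons_concat_apply_last (f k) (f (3*n-1-k)) [f (4*n-1-k), f (n+k)]
  have hmem : ∀ j < n, ∀ m < 4*n, m ≠ j → m ≠ 4*n-1-j → m ≠ n+j → m ≠ 3*n-1-j →
      F j (f m) = f m := by
    intro j hj m hm h1 h2 h3 h4
    apply List.formPerm_apply_of_notMem
    simp only [List.map_cons, List.map_nil, List.mem_cons, List.not_mem_nil, or_false,
      List.mem_singleton]
    push_neg
    exact ⟨fun h => h1 (feq _ _ hm (by omega) h), fun h => h2 (feq _ _ hm (by omega) h),
      fun h => h3 (feq _ _ hm (by omega) h), fun h => h4 (feq _ _ hm (by omega) h)⟩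
  have σa : ∀ m < 4*n, σ (f m) = f (sfun n m) := by
    intro m hm
    rw [hσ]
    rcases Nat.lt_or_ge m n with h | h
    · rw [prod_map_range_apply F n m h (f m)
        (fun j hj hne => hmem j hj m hm (by omega) (by omega) (by omega) (by omega))
        (fun j hj hne => by
          rw [cyc0 m h]
          exact hmem j hj _ (by omega) (by omega) (by omega) (by omega) (by omega)),
        cyc0 m h]
      congr 1
      unfold sfun
      split_ifs <;> omega
    rcases Nat.lt_or_ge m (2*n) with h2 | h2
    · have e : f m = f (n + (m - n)) := by congr 1; omega
      rw [e, prod_map_range_apply F n (m-n) (by omega) _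
        (fun j hj hne => hmem j hj _ (by omega) (by omega) (by omega) (by omega) (by omega))
        (fun j hj hne => by
          rw [cyc2 _ (by omega)]
          exact hmem j hj _ (by omega) (by omega) (by omega) (by omega) (by omega)),
        cyc2 _ (by omega)]
      congr 1
      unfold sfun
      split_ifs <;> omega
    rcases Nat.lt_or_ge m (3*n) with h3 | h3
    · have e : f m = f (3*n - 1 - (3*n-1-m)) := by congr 1; omega
      rw [e, prod_map_range_apply F n (3*n-1-m) (by omega) _
        (fun j hj hne => hmem j hj _ (by omega) (by omega) (by omega) (by omega) (by omega))
        (fun j hj hne => by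
          rw [cyc3 _ (by omega)]
          exact hmem j hj _ (by omega) (by omega) (by omega) (by omega) (by omega)),
        cyc3 _ (by omega)]
      congr 1
      unfold sfun
      split_ifs <;> omega
    · have e : f m = f (4*n - 1 - (4*n-1-m)) := by congr 1; omega
      rw [e, prod_map_range_apply F n (4*n-1-m) (by omega) _
        (fun j hj hne => hmem j hj _ (by omega) (by omega) (by omega) (by omega) (by omega))
        (fun j hj hne => by
          rw [cyc1 _ (by omega)]
          exact hmem j hj _ (by omega) (by omega) (by omega) (by omega) (by omega)),
        cyc1 _ (by omega)]
      congr 1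
      unfold sfun
      split_ifs <;> omega
  -- bounds
  have eb : ∀ m < 4*n, efun n m < 4*n := by
    intro m hm; unfold efun; split_ifs <;> omega
  have sb : ∀ m < 4*n, sfun n m < 4*n := by
    intro m hm; unfold sfun; split_ifs <;> omega
  -- ===== relation 1 =====
  have R1 : η ^ (2*n) = 1 := by
    apply Equiv.ext
    intro x
    rw [Equiv.Perm.one_apply, ← fx x]
    rcases lt_or_ge (x : ℕ) (2*n) with h | h
    · rw [hp1 (2*n) _ h, Nat.add_mod_right, Nat.mod_eq_of_lt h]
    · have e : f (x : ℕ) = f (2*n + ((x : ℕ) - 2*n)) := by congr 1; omega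
      rw [e, hp2 (2*n) _ (by omega), Nat.add_mod_right,
        Nat.mod_eq_of_lt (by omega)]
  -- ===== relation 2 =====
  have key : η * σ * η = σ := by
    apply Equiv.ext
    intro x
    simp only [Equiv.Perm.mul_apply]
    rw [← fx x, ηa _ x.isLt, σa _ (eb _ x.isLt), ηa _ (sb _ (eb _ x.isLt)), σa _ x.isLt]
    congr 1
    unfold efun sfun
    split_ifs <;> omega
  have R2 : σ⁻¹ * η * σ = η⁻¹ := by
    rw [mul_assoc, inv_mul_eq_iff_eq_mul, eq_mul_inv_iff_mul_eq]
    exact key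
  -- ===== relation 3 =====
  have R3 : σ ^ 2 = η ^ n := by
    apply Equiv.ext
    intro x
    rw [pow_two, Equiv.Perm.mul_apply, ← fx x, σa _ x.isLt, σa _ (sb _ x.isLt), ηn _ x.isLt]
    congr 1
    unfold sfun pfun
    split_ifs <;> omega
  exact ⟨R1, R2, R3⟩
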